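/- Let K be a number field and E/K an elliptic curve given by y² = x(x+α)(x+β) with α, β ∈ O_K. If there exist a, b, z ∈ O_K with z ≠ 0 and a/b ∉ {−2, −1, −1/2, 0, 1} such that α = a³(a+2b)z² and β = b³(b+2a)z², then E(K) contains a point of order 3. -/

import Mathlib

open WeierstrassCurve WeierstrassCurve.Affine NumberField

private lemma some_eq_some_aux {F : Type*} [Field F] {W : Affine F} {x₁ y₁ x₂ y₂ : F}
    (hx : x₁ = x₂) (hy : y₁ = y₂) (h₁ : W.Nonsingular x₁ y₁) (h₂ : W.Nonsingular x₂ y₂) :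
    Point.some _ _ h₁ = Point.some _ _ h₂ := by subst hx; subst hy; rfl

open Classical in
/-- Let `K` be a number field and `E/K` the elliptic curve
`y² = x(x+α)(x+β)` with `α, β ∈ 𝓞 K`. If there exist `a, b, z ∈ 𝓞 K` with `z ≠ 0` and
`a/b ∉ {-2, -1, -1/2, 0, 1}` such that `α = a³(a+2b)z²` and `β = b³(b+2a)z²`,
then `E(K)` contains a point of order 3. -/
theorem stmt_3 (K : Type*) [Field K] [NumberField K] (a b z : 𝓞 K) (hz : z ≠ 0)
    (hab : algebraMap (𝓞 K) K a / algebraMap (𝓞 K) K b ∉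
      ({-2, -1, -1/2, 0, 1} : Set K))
    (α β : 𝓞 K) (hα : α = a ^ 3 * (a + 2 * b) * z ^ 2) (hβ : β = b ^ 3 * (b + 2 * a) * z ^ 2)
    (hα0 : α ≠ 0) (hβ0 : β ≠ 0) (hαβ : α ≠ β)
    (W : Affine K)
    (hW : W = { a₁ := 0, a₂ := algebraMap (𝓞 K) K (α + β), a₃ := 0,
                a₄ := algebraMap (𝓞 K) K (α * β), a₆ := 0 }) :
    ∃ P : W.Point, addOrderOf P = 3 := by
  set ka : K := algebraMap (𝓞 K) K a with hka
  set kb : K := algebraMap (𝓞 K) K b with hkb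
  set kz : K := algebraMap (𝓞 K) K z with hkz
  have hdiv : ka / kb ≠ 0 := fun h => hab (by simp [h])
  obtain ⟨ha0, hb0⟩ := div_ne_zero_iff.mp hdiv
  have hz0 : kz ≠ 0 := RingOfIntegers.coe_ne_zero_iff.mpr hz
  have hsum : ka + kb ≠ 0 := by
    intro h
    apply hab
    have hk : ka = -kb := eq_neg_of_add_eq_zero_left h
    have : ka / kb = -1 := by rw [hk, neg_div, div_self hb0]
    simp [this]
  -- the 3-torsion point
  set x₀ : K := ka ^ 2 * kb ^ 2 * kz ^ 2 with hx₀
  set y₀ : K := ka ^ 2 * kb ^ 2 * (ka + kb) ^ 2 * kz ^ 3 with hy₀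
  have hy0 : y₀ ≠ 0 := by
    rw [hy₀]
    exact mul_ne_zero (mul_ne_zero (mul_ne_zero (pow_ne_zero _ ha0) (pow_ne_zero _ hb0))
      (pow_ne_zero _ hsum)) (pow_ne_zero _ hz0)
  have hαK : algebraMap (𝓞 K) K α = ka ^ 3 * (ka + 2 * kb) * kz ^ 2 := by
    rw [hα]; push_cast [map_mul, map_pow, map_add, map_ofNat]; rfl
  have hβK : algebraMap (𝓞 K) K β = kb ^ 3 * (kb + 2 * ka) * kz ^ 2 := by
    rw [hβ]; push_cast [map_mul, map_pow, map_add, map_ofNat]; rfl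
  have ha₁ : W.a₁ = 0 := by rw [hW]
  have ha₃ : W.a₃ = 0 := by rw [hW]
  have ha₂ : W.a₂ = ka ^ 3 * (ka + 2 * kb) * kz ^ 2 + kb ^ 3 * (kb + 2 * ka) * kz ^ 2 := by
    rw [hW]; show algebraMap (𝓞 K) K (α + β) = _; rw [map_add, hαK, hβK]
  have ha₄ : W.a₄ = (ka ^ 3 * (ka + 2 * kb) * kz ^ 2) * (kb ^ 3 * (kb + 2 * ka) * kz ^ 2) := by
    rw [hW]; show algebraMap (𝓞 K) K (α * β) = _; rw [map_mul, hαK, hβK]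
  have ha₆ : W.a₆ = 0 := by rw [hW]
  have heq : W.Equation x₀ y₀ := by
    rw [equation_iff, ha₁, ha₂, ha₃, ha₄, ha₆, hx₀, hy₀]
    ring
  have hnegY : W.negY x₀ y₀ = -y₀ := by
    rw [negY, ha₁, ha₃]; ring
  have h2K : (2 : K) ≠ 0 := two_ne_zero
  have hyne : y₀ ≠ W.negY x₀ y₀ := by
    rw [hnegY]
    intro h
    have h2 : (2 : K) * y₀ = 0 := by linear_combination h
    exact hy0 ((mul_eq_zero.mp h2).resolve_left h2K)
  have hns : W.Nonsingular x₀ y₀ := by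
    rw [nonsingular_iff]
    exact ⟨heq, Or.inr hyne⟩
  set P : W.Point := Point.some _ _ hns with hP
  -- doubling computation
  have hL : W.slope x₀ x₀ y₀ y₀ = (3 * x₀ ^ 2 + 2 * W.a₂ * x₀ + W.a₄) / (2 * y₀) := by
    rw [slope_of_Y_ne rfl hyne, hnegY, ha₁]
    congr 1 <;> ring
  have hL2 : (W.slope x₀ x₀ y₀ y₀) ^ 2 = W.a₂ + 3 * x₀ := by
    rw [hL, div_pow, div_eq_iff (pow_ne_zero 2 (mul_ne_zero h2K hy0))]
    rw [ha₂, ha₄, hx₀, hy₀]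
    ring
  have hxeq : W.addX x₀ x₀ (W.slope x₀ x₀ y₀ y₀) = x₀ := by
    rw [addX, hL2, ha₁]
    ring
  have hyeq : W.negAddY x₀ x₀ y₀ (W.slope x₀ x₀ y₀ y₀) = y₀ := by
    rw [negAddY, hxeq, sub_self, mul_zero, zero_add]
  have hPP : P + P = -P := by
    rw [hP, Point.add_self_of_Y_ne' hyne]
    exact neg_inj.mpr (some_eq_some_aux hxeq hyeq _ _)
  have h3 : (3 : ℕ) • P = 0 := by
    have : (3 : ℕ) • P = P + P + P := by
      rw [succ_nsmul, two_nsmul]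
    rw [this, hPP, neg_add_cancel]
  have hPne : P ≠ 0 := by
    rw [hP]
    intro h
    cases h
  haveI : Fact (Nat.Prime 3) := ⟨by norm_num⟩
  exact ⟨P, addOrderOf_eq_prime h3 hPne⟩
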